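/- Let M, L ∈ ℝ^{2n×2n} form a symplectic matrix pencil and let M̂ = M⋆ M, L̂ = L⋆ L be a doubling transformation of M − λL. Suppose there exist nonsingular W, Z ∈ ℝ^{2n×2n}, a matrix J_r ∈ ℝ^{r×r}, and a nilpotent matrix N_{2n−r} ∈ ℝ^{(2n−r)×(2n−r)} such that W M Z = diag(J_r, I_{2n−r}) and W L Z = diag(I_r, N_{2n−r}). Then there exists a nonsingular matrix Ŵ ∈ ℝ^{2n×2n} such that Ŵ M̂ Z = diag(J_r², I_{2n−r}) and Ŵ L̂ Z = diag(I_r, N_{2n−r}²). -/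

import Mathlib

open Matrix

section auxlemmas

set_option linter.unusedSectionVars false

variable {α : Type*} [CommRing α] {m₁ m₂ : Type*} [Fintype m₁] [Fintype m₂]
  [DecidableEq m₁] [DecidableEq m₂] (C : Matrix m₁ m₁ α) (D : Matrix m₂ m₂ α)

local notation "dA" => (fromBlocks C 0 0 1 : Matrix (m₁ ⊕ m₂) (m₁ ⊕ m₂) α)
local notation "dB" => (fromBlocks 1 0 0 D : Matrix (m₁ ⊕ m₂) (m₁ ⊕ m₂) α)
local notation "dE1" => (fromBlocks 1 0 0 0 : Matrix (m₁ ⊕ m₂) (m₁ ⊕ m₂) α)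
local notation "dE2" => (fromBlocks 0 0 0 1 : Matrix (m₁ ⊕ m₂) (m₁ ⊕ m₂) α)

lemma bk1 : dE1 * dA = dA * dE1 := by simp [fromBlocks_multiply]

lemma bk2 : dB * dE1 = dE1 := by simp [fromBlocks_multiply]

lemma bk3 : dA * dE2 = dE2 := by simp [fromBlocks_multiply]

lemma bk4 : dE2 * dB = dB * dE2 := by simp [fromBlocks_multiply]

lemma bk5 : dE1 * dB = dE1 := by simp [fromBlocks_multiply]

lemma bk6 : dE2 * dA = dE2 := by simp [fromBlocks_multiply]

lemma bk7 : dA * dE1 + dE2 = dA := by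
  simp [fromBlocks_multiply, fromBlocks_add]

lemma bk8 : dE1 + dB * dE2 = dB := by
  simp [fromBlocks_multiply, fromBlocks_add]

lemma bk9 : dE2 * dE1 = 0 := by simp [fromBlocks_multiply]

lemma bk10 : dE1 * dE1 = dE1 := by simp [fromBlocks_multiply]

lemma bk11 : dE1 + dE2 = (1 : Matrix (m₁ ⊕ m₂) (m₁ ⊕ m₂) α) := by
  rw [fromBlocks_add]
  simpa using fromBlocks_one

lemma bk12 : dE1 * dE2 = 0 := by simp [fromBlocks_multiply]

lemma bk13 : dE2 * dE2 = dE2 := by simp [fromBlocks_multiply]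

lemma bk14 : dA * dA = (fromBlocks (C ^ 2) 0 0 1 : Matrix (m₁ ⊕ m₂) (m₁ ⊕ m₂) α) := by
  simp [fromBlocks_multiply, pow_two]

lemma bk15 : dB * dB = (fromBlocks 1 0 0 (D ^ 2) : Matrix (m₁ ⊕ m₂) (m₁ ⊕ m₂) α) := by
  simp [fromBlocks_multiply, pow_two]

end auxlemmas

lemma key_alg {α : Type*} [CommRing α] {k : Type*} [Fintype k] [DecidableEq k]
    (P Q A B E1 E2 : Matrix k k α)
    (hPB : P * B = Q * A)
    (hE1A : E1 * A = A * E1) (hBE1 : B * E1 = E1) (hAE2 : A * E2 = E2)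
    (hE2B : E2 * B = B * E2) (hE1B : E1 * B = E1) (hE2A : E2 * A = E2)
    (hA : A * E1 + E2 = A) (hB : E1 + B * E2 = B) :
    (Q * E1 + P * E2) * (A * A) = P * A ∧ (Q * E1 + P * E2) * (B * B) = Q * B := by
  have hE1A' : ∀ X, E1 * (A * X) = A * (E1 * X) := fun X => by
    rw [← mul_assoc, hE1A, mul_assoc]
  have hBE1' : ∀ X, B * (E1 * X) = E1 * X := fun X => by
    rw [← mul_assoc, hBE1]
  have hE2A' : ∀ X, E2 * (A * X) = E2 * X := fun X => by
    rw [← mul_assoc, hE2A]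
  have hE1B' : ∀ X, E1 * (B * X) = E1 * X := fun X => by
    rw [← mul_assoc, hE1B]
  have hE2B' : ∀ X, E2 * (B * X) = B * (E2 * X) := fun X => by
    rw [← mul_assoc, hE2B, mul_assoc]
  have hAE2' : ∀ X, A * (E2 * X) = E2 * X := fun X => by
    rw [← mul_assoc, hAE2]
  constructor
  · have h1 : Q * (E1 * (A * A)) = P * (A * E1) := by
      rw [hE1A' A, ← mul_assoc Q A, ← hPB, mul_assoc, hBE1', hE1A]
    have h2 : P * (E2 * (A * A)) = P * E2 := by rw [hE2A' A, hE2A]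
    calc (Q * E1 + P * E2) * (A * A)
        = Q * (E1 * (A * A)) + P * (E2 * (A * A)) := by
          rw [add_mul, mul_assoc, mul_assoc]
      _ = P * (A * E1) + P * E2 := by rw [h1, h2]
      _ = P * A := by rw [← mul_add, hA]
  · have h1 : Q * (E1 * (B * B)) = Q * E1 := by rw [hE1B' B, hE1B]
    have h2 : P * (E2 * (B * B)) = Q * (B * E2) := by
      rw [hE2B' B, ← mul_assoc P B, hPB, mul_assoc, hAE2', hE2B]
    calc (Q * E1 + P * E2) * (B * B)
        = Q * (E1 * (B * B)) + P * (E2 * (B * B)) := by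
          rw [add_mul, mul_assoc, mul_assoc]
      _ = Q * E1 + Q * (B * E2) := by rw [h1, h2]
      _ = Q * B := by rw [← mul_add, hB]

theorem stmt_2 (n r s : ℕ) (hrs : r + s = 2 * n)
    (M L Mst Lst J : Matrix (Fin n ⊕ Fin n) (Fin n ⊕ Fin n) ℝ)
    (hJ : J = fromBlocks 0 1 (-1) 0)
    (hsymp : M * J * Mᵀ = L * J * Lᵀ)
    (hrank : (fromCols Mst Lst).rank = 2 * n)
    (hswap : Mst * L = Lst * M)
    (W Z : Matrix (Fin n ⊕ Fin n) (Fin n ⊕ Fin n) ℝ)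
    (hW : IsUnit W) (hZ : IsUnit Z)
    (e : (Fin n ⊕ Fin n) ≃ (Fin r ⊕ Fin s))
    (Jr : Matrix (Fin r) (Fin r) ℝ) (N : Matrix (Fin s) (Fin s) ℝ)
    (hN : IsNilpotent N)
    (hM : W * M * Z = (fromBlocks Jr 0 0 1).submatrix e e)
    (hL : W * L * Z = (fromBlocks 1 0 0 N).submatrix e e) :
    ∃ What : Matrix (Fin n ⊕ Fin n) (Fin n ⊕ Fin n) ℝ, IsUnit What ∧
      What * (Mst * M) * Z = (fromBlocks (Jr ^ 2) 0 0 1).submatrix e e ∧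
      What * (Lst * L) * Z = (fromBlocks 1 0 0 (N ^ 2)).submatrix e e := by
  have hWd : IsUnit W.det := (Matrix.isUnit_iff_isUnit_det W).mp hW
  have hWiW : W⁻¹ * W = 1 := Matrix.nonsing_inv_mul W hWd
  have hmul : ∀ C D : Matrix (Fin r ⊕ Fin s) (Fin r ⊕ Fin s) ℝ,
      C.submatrix e e * D.submatrix e e = (C * D).submatrix e e :=
    fun C D => Matrix.submatrix_mul_equiv C D e e e
  set P : Matrix (Fin n ⊕ Fin n) (Fin n ⊕ Fin n) ℝ := Mst * W⁻¹ with hPdef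
  set Q : Matrix (Fin n ⊕ Fin n) (Fin n ⊕ Fin n) ℝ := Lst * W⁻¹ with hQdef
  have hPW : P * W = Mst := by rw [hPdef, mul_assoc, hWiW, mul_one]
  have hQW : Q * W = Lst := by rw [hQdef, mul_assoc, hWiW, mul_one]
  set sA : Matrix (Fin n ⊕ Fin n) (Fin n ⊕ Fin n) ℝ :=
    (fromBlocks Jr 0 0 1).submatrix e e with hsA
  set sB : Matrix (Fin n ⊕ Fin n) (Fin n ⊕ Fin n) ℝ :=
    (fromBlocks 1 0 0 N).submatrix e e with hsB
  set sE1 : Matrix (Fin n ⊕ Fin n) (Fin n ⊕ Fin n) ℝ :=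
    (fromBlocks 1 0 0 0).submatrix e e with hsE1
  set sE2 : Matrix (Fin n ⊕ Fin n) (Fin n ⊕ Fin n) ℝ :=
    (fromBlocks 0 0 0 1).submatrix e e with hsE2
  -- transferred block identities
  have s1 : sE1 * sA = sA * sE1 := by rw [hsE1, hsA, hmul, hmul, bk1]
  have s2 : sB * sE1 = sE1 := by rw [hsB, hsE1, hmul, bk2]
  have s3 : sA * sE2 = sE2 := by rw [hsA, hsE2, hmul, bk3]
  have s4 : sE2 * sB = sB * sE2 := by rw [hsE2, hsB, hmul, hmul, bk4]
  have s5 : sE1 * sB = sE1 := by rw [hsE1, hsB, hmul, bk5]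
  have s6 : sE2 * sA = sE2 := by rw [hsE2, hsA, hmul, bk6]
  have s7 : sA * sE1 + sE2 = sA := by
    rw [hsA, hsE1, hsE2, hmul]
    show ((fromBlocks Jr 0 0 1 * fromBlocks 1 0 0 0
      + fromBlocks 0 0 0 1 : Matrix (Fin r ⊕ Fin s) (Fin r ⊕ Fin s) ℝ)).submatrix e e = _
    rw [bk7]
  have s8 : sE1 + sB * sE2 = sB := by
    rw [hsB, hsE1, hsE2, hmul]
    show ((fromBlocks 1 0 0 0
      + fromBlocks 1 0 0 N * fromBlocks 0 0 0 1 : Matrix (Fin r ⊕ Fin s) (Fin r ⊕ Fin s) ℝ)).submatrix e e = _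
    rw [bk8]
  have s9 : sE2 * sE1 = 0 := by
    rw [hsE2, hsE1, hmul, bk9]
    ext i j
    rfl
  have s10 : sE1 * sE1 = sE1 := by rw [hsE1, hmul, bk10]
  have s11 : sE1 + sE2 = 1 := by
    rw [hsE1, hsE2]
    show ((fromBlocks 1 0 0 0 + fromBlocks 0 0 0 1 : Matrix (Fin r ⊕ Fin s) (Fin r ⊕ Fin s) ℝ)).submatrix e e = _
    rw [bk11, submatrix_one_equiv]
  have s12 : sE1 * sE2 = 0 := by
    rw [hsE1, hsE2, hmul, bk12]
    ext i j
    rfl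
  have s13 : sE2 * sE2 = sE2 := by rw [hsE2, hmul, bk13]
  -- pencil relations
  have hPA : P * sA = Mst * M * Z := by
    rw [← hM, hPdef]
    simp only [← mul_assoc]
    rw [mul_assoc Mst W⁻¹ W, hWiW, mul_one]
  have hQB : Q * sB = Lst * L * Z := by
    rw [← hL, hQdef]
    simp only [← mul_assoc]
    rw [mul_assoc Lst W⁻¹ W, hWiW, mul_one]
  have hPB2 : P * sB = Mst * L * Z := by
    rw [← hL, hPdef]
    simp only [← mul_assoc]
    rw [mul_assoc Mst W⁻¹ W, hWiW, mul_one]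
  have hQA2 : Q * sA = Lst * M * Z := by
    rw [← hM, hQdef]
    simp only [← mul_assoc]
    rw [mul_assoc Lst W⁻¹ W, hWiW, mul_one]
  have hPBQA : P * sB = Q * sA := by rw [hPB2, hQA2, hswap]
  set X : Matrix (Fin n ⊕ Fin n) (Fin n ⊕ Fin n) ℝ := Q * sE1 + P * sE2 with hXdef
  obtain ⟨keyM, keyL⟩ := key_alg P Q sA sB sE1 sE2 hPBQA s1 s2 s3 s4 s5 s6 s7 s8
  -- matrix-level identities for the kernel argument
  have mX1 : X * sE1 = Q * sE1 := by
    rw [hXdef, add_mul, mul_assoc P, s9, mul_zero, add_zero, mul_assoc Q, s10]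
  have mX2 : X * sE2 = P * sE2 := by
    rw [hXdef, add_mul, mul_assoc Q, s12, mul_zero, zero_add, mul_assoc P, s13]
  have mP1 : P * sE1 = Q * sE1 * sA := by
    conv_lhs => rw [← s2]
    rw [← mul_assoc, hPBQA, mul_assoc, ← s1, ← mul_assoc]
  have mQ2 : Q * sE2 = P * sE2 * sB := by
    conv_lhs => rw [← s3]
    rw [← mul_assoc, ← hPBQA, mul_assoc, ← s4, ← mul_assoc]
  have mP : P = P * sE1 + P * sE2 := by rw [← mul_add, s11, mul_one]
  have mQ : Q = Q * sE1 + Q * sE2 := by rw [← mul_add, s11, mul_one]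
  -- X is invertible
  have hker : ∀ u : (Fin n ⊕ Fin n) → ℝ, u ᵥ* X = 0 → u = 0 := by
    intro u hu
    have h1 : u ᵥ* (Q * sE1) = 0 := by
      rw [← mX1, ← Matrix.vecMul_vecMul, hu, Matrix.zero_vecMul]
    have h2 : u ᵥ* (P * sE2) = 0 := by
      rw [← mX2, ← Matrix.vecMul_vecMul, hu, Matrix.zero_vecMul]
    have h3 : u ᵥ* (P * sE1) = 0 := by
      rw [mP1, ← Matrix.vecMul_vecMul, h1, Matrix.zero_vecMul]
    have h4 : u ᵥ* (Q * sE2) = 0 := by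
      rw [mQ2, ← Matrix.vecMul_vecMul, h2, Matrix.zero_vecMul]
    have hP0 : u ᵥ* P = 0 := by
      rw [mP, Matrix.vecMul_add, h3, h2, add_zero]
    have hQ0 : u ᵥ* Q = 0 := by
      rw [mQ, Matrix.vecMul_add, h1, h4, add_zero]
    have hMst : u ᵥ* Mst = 0 := by
      rw [← hPW, ← Matrix.vecMul_vecMul, hP0, Matrix.zero_vecMul]
    have hLst : u ᵥ* Lst = 0 := by
      rw [← hQW, ← Matrix.vecMul_vecMul, hQ0, Matrix.zero_vecMul]
    have hF : u ᵥ* fromCols Mst Lst = 0 := by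
      rw [Matrix.vecMul_fromCols, hMst, hLst]
      ext x; cases x <;> rfl
    have hli : LinearIndependent ℝ (fun i => fromCols Mst Lst i) := by
      rw [linearIndependent_iff_card_eq_finrank_span]
      have hcard : Fintype.card (Fin n ⊕ Fin n) = 2 * n := by
        simp [two_mul]
      rw [hcard, ← hrank, Matrix.rank_eq_finrank_span_row]
      rfl
    have hinj := Matrix.vecMul_injective_iff.mpr hli
    have heq : (fromCols Mst Lst).vecMul u = (fromCols Mst Lst).vecMul 0 := by
      show u ᵥ* _ = (0 : (Fin n ⊕ Fin n) → ℝ) ᵥ* _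
      rw [hF, Matrix.zero_vecMul]
    exact hinj heq
  have hX : IsUnit X := by
    rw [← Matrix.vecMul_injective_iff_isUnit]
    intro u v huv
    have h : (u - v) ᵥ* X = 0 := by
      rw [Matrix.sub_vecMul]
      show u ᵥ* X - v ᵥ* X = 0
      rw [show u ᵥ* X = v ᵥ* X from huv, sub_self]
    exact sub_eq_zero.mp (hker _ h)
  have hXd : IsUnit X.det := (Matrix.isUnit_iff_isUnit_det X).mp hX
  have hXiX : X⁻¹ * X = 1 := Matrix.nonsing_inv_mul X hXd
  have hXinv : IsUnit X⁻¹ := Matrix.isUnit_nonsing_inv_iff.mpr hX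
  have hAA : sA * sA = (fromBlocks (Jr ^ 2) 0 0 1).submatrix e e := by
    rw [hsA, hmul, bk14]
  have hBB : sB * sB = (fromBlocks 1 0 0 (N ^ 2)).submatrix e e := by
    rw [hsB, hmul, bk15]
  refine ⟨X⁻¹, hXinv, ?_, ?_⟩
  · calc X⁻¹ * (Mst * M) * Z = X⁻¹ * (Mst * M * Z) := by rw [mul_assoc]
      _ = X⁻¹ * (X * ((fromBlocks (Jr ^ 2) 0 0 1).submatrix e e)) := by
          rw [← hPA, ← keyM, hAA, hXdef]
      _ = (fromBlocks (Jr ^ 2) 0 0 1).submatrix e e := by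
          rw [← mul_assoc, hXiX, one_mul]
  · calc X⁻¹ * (Lst * L) * Z = X⁻¹ * (Lst * L * Z) := by rw [mul_assoc]
      _ = X⁻¹ * (X * ((fromBlocks 1 0 0 (N ^ 2)).submatrix e e)) := by
          rw [← hQB, ← keyL, hBB, hXdef]
      _ = (fromBlocks 1 0 0 (N ^ 2)).submatrix e e := by
          rw [← mul_assoc, hXiX, one_mul]
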